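/- (DCA sublinear rate, regime p5.) Let f1 ∈ F_{μ1,L1} and f2 ∈ F_{μ2,L2} with μ1 > −μ2 > 0, L1 > μ2, μ1 < L1, μ2 < L2, L2 > 0, and max{ (1/L1)·(2 + L2/μ2), 0 } < 1/μ1 + 1/μ2 + 1/L2. Let F := f1 − f2, let N ≥ 1, and let x⁰, …, x^N be a DCA sequence with subgradients g1^k ∈ ∂f1(x^k), g2^k ∈ ∂f2(x^k). Then (1/2)·min_{0 ≤ k ≤ N} ‖g1^k − g2^k‖² ≤ (F(x⁰) − F(x^N)) / (p·N), where p = (μ1 + μ2)/μ2². -/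

import Mathlib

open RealInnerProductSpace

variable {H : Type*} [NormedAddCommGroup H] [InnerProductSpace ℝ H]

/-- `f` has lower curvature `μ`, i.e. `f - (μ/2)‖·‖²` is convex. -/
def HasLowerCurvature (μ : ℝ) (f : H → ℝ) : Prop :=
  ConvexOn ℝ Set.univ fun x => f x - μ / 2 * ‖x‖ ^ 2

/-- `f` has upper curvature `L`, i.e. `(L/2)‖·‖² - f` is convex. -/
def HasUpperCurvature (L : ℝ) (f : H → ℝ) : Prop :=
  ConvexOn ℝ Set.univ fun x => L / 2 * ‖x‖ ^ 2 - f x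

/-- `g` is a subgradient of `f` (of lower curvature `μ`) at `x`. -/
def IsSubgradient (μ : ℝ) (f : H → ℝ) (x g : H) : Prop :=
  ∀ y, f y ≥ f x + ⟪g, y - x⟫ + μ / 2 * ‖y - x‖ ^ 2


lemma smooth_upper {μ L : ℝ} {f : H → ℝ} (hup : HasUpperCurvature L f)
    (hμL : μ ≤ L) {x g : H} (hg : IsSubgradient μ f x g) (z : H) :
    f z ≤ f x + ⟪g, z - x⟫ + L / 2 * ‖z - x‖ ^ 2 := by
  apply le_of_forall_pos_le_add
  intro ε hε
  set d := z - x with hd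
  have hzd : z = x + d := by rw [hd]; abel
  have hC0 : 0 ≤ (L - μ) / 2 * ‖d‖ ^ 2 := by
    apply mul_nonneg (by linarith) (by positivity)
  set t := ε / ((L - μ) / 2 * ‖d‖ ^ 2 + 1) with ht
  have ht0 : 0 < t := by positivity
  have hCt : (L - μ) / 2 * ‖d‖ ^ 2 * t ≤ ε := by
    rw [ht, mul_div_assoc']
    rw [div_le_iff₀ (by linarith : (0:ℝ) < (L - μ) / 2 * ‖d‖ ^ 2 + 1)]
    nlinarith
  have hsne : (1 : ℝ) + t ≠ 0 := by positivity
  set α := t / (1 + t) with hα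
  set β := 1 / (1 + t) with hβ
  have hα0 : 0 ≤ α := by positivity
  have hβ0 : 0 ≤ β := by positivity
  have hαβ : α + β = 1 := by
    rw [hα, hβ, ← add_div, div_eq_one_iff_eq hsne]; ring
  have hcomb : α • z + β • (x - t • d) = x := by
    rw [hzd]
    match_scalars
    · rw [hα, hβ]; field_simp; ring
    · rw [hα, hβ]; ring
  have hconv := hup.2 (Set.mem_univ z) (Set.mem_univ (x - t • d)) hα0 hβ0 hαβ
  rw [hcomb] at hconv
  simp only [smul_eq_mul] at hconv
  have hconv2 : (1 + t) * (L / 2 * ‖x‖ ^ 2 - f x) ≤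
      t * (L / 2 * ‖z‖ ^ 2 - f z) + (L / 2 * ‖x - t • d‖ ^ 2 - f (x - t • d)) := by
    have h1 := mul_le_mul_of_nonneg_left hconv (by positivity : (0:ℝ) ≤ 1 + t)
    have heq : (1 + t) * (α * (L / 2 * ‖z‖ ^ 2 - f z) + β * (L / 2 * ‖x - t • d‖ ^ 2 - f (x - t • d)))
        = t * (L / 2 * ‖z‖ ^ 2 - f z) + (L / 2 * ‖x - t • d‖ ^ 2 - f (x - t • d)) := by
      rw [hα, hβ]; field_simp
    rw [heq] at h1
    exact h1
  have hsub := hg (x - t • d)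
  have he : (x - t • d) - x = -(t • d) := by abel
  rw [he, inner_neg_right, real_inner_smul_right, norm_neg, norm_smul,
    Real.norm_eq_abs, mul_pow, sq_abs] at hsub
  have hXp : ‖x - t • d‖ ^ 2 = ‖x‖ ^ 2 - 2 * (t * ⟪x, d⟫) + t ^ 2 * ‖d‖ ^ 2 := by
    rw [norm_sub_sq_real, real_inner_smul_right, norm_smul, Real.norm_eq_abs, mul_pow, sq_abs]
  have hZ : ‖z‖ ^ 2 = ‖x‖ ^ 2 + 2 * ⟪x, d⟫ + ‖d‖ ^ 2 := by
    rw [hzd, norm_add_sq_real]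
  rw [hXp, hZ] at hconv2
  have thCt := mul_le_mul_of_nonneg_left hCt ht0.le
  have htfz : t * f z ≤ t * (f x + ⟪g, d⟫ + L / 2 * ‖d‖ ^ 2 + ε) := by
    nlinarith [hconv2, hsub, thCt]
  have := le_of_mul_le_mul_left htfz ht0
  linarith

lemma interp {μ L : ℝ} {f : H → ℝ} (hup : HasUpperCurvature L f)
    (hμL : μ < L) {x y gx gy : H} (hx : IsSubgradient μ f x gx)
    (hy : IsSubgradient μ f y gy) :
    f x + ⟪gx, y - x⟫ + μ / 2 * ‖y - x‖ ^ 2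
      + ‖gy - gx - μ • (y - x)‖ ^ 2 / (2 * (L - μ)) ≤ f y := by
  have hLμ : 0 < L - μ := sub_pos.mpr hμL
  set e := y - x with he
  set u := gy - gx - μ • e with hu
  set t := (L - μ)⁻¹ with htdef
  have ht0 : 0 < t := by positivity
  have hLt : (L - μ) * t = 1 := mul_inv_cancel₀ hLμ.ne'
  set z := y - t • u with hz
  have h1 := hx z
  have h2 := smooth_upper hup hμL.le hy z
  have hzy : z - y = -(t • u) := by rw [hz]; abel
  have hzx : z - x = e - t • u := by rw [hz, he]; abel
  rw [hzy, inner_neg_right, real_inner_smul_right, norm_neg, norm_smul,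
    Real.norm_eq_abs, mul_pow, sq_abs] at h2
  rw [hzx, inner_sub_right, real_inner_smul_right, norm_sub_sq_real,
    real_inner_smul_right, norm_smul, Real.norm_eq_abs, mul_pow, sq_abs] at h1
  have hgyx : gy - gx = u + μ • e := by rw [hu]; abel
  have ha : ⟪gy, u⟫ - ⟪gx, u⟫ = ‖u‖ ^ 2 + μ * ⟪e, u⟫ := by
    have : (⟪gy - gx, u⟫ : ℝ) = ⟪u + μ • e, u⟫ := by rw [hgyx]
    rw [inner_sub_left, inner_add_left, real_inner_smul_left,
      real_inner_self_eq_norm_sq] at this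
    linarith
  have ha' : t * ⟪gy, u⟫ - t * ⟪gx, u⟫ = t * ‖u‖ ^ 2 + t * (μ * ⟪e, u⟫) := by
    linear_combination t * ha
  have hq : (L - μ) * (t ^ 2 * ‖u‖ ^ 2) = t * ‖u‖ ^ 2 := by
    calc (L - μ) * (t ^ 2 * ‖u‖ ^ 2) = ((L - μ) * t) * (t * ‖u‖ ^ 2) := by ring
      _ = t * ‖u‖ ^ 2 := by rw [hLt, one_mul]
  have hdiv : ‖u‖ ^ 2 / (2 * (L - μ)) = t * ‖u‖ ^ 2 / 2 := by
    rw [htdef]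
    field_simp
  rw [hdiv]
  linarith [h1, h2, ha', hq]

set_option maxHeartbeats 1000000 in
/-- DCA sublinear rate, regime p5. -/
theorem dca_rate_p5
    (mu1 mu2 L1 L2 : ℝ)
    (h1 : -mu2 < mu1) (h2 : 0 < -mu2) (h3 : mu2 < L1)
    (h4 : mu1 < L1) (h5 : mu2 < L2) (h6 : 0 < L2)
    (h7 : max ((1 / L1) * (2 + L2 / mu2)) 0 < 1 / mu1 + 1 / mu2 + 1 / L2)
    (f1 f2 : H → ℝ)
    (h1lo : HasLowerCurvature mu1 f1) (h1up : HasUpperCurvature L1 f1)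
    (h2lo : HasLowerCurvature mu2 f2) (h2up : HasUpperCurvature L2 f2)
    (N : ℕ) (hN : 1 ≤ N) (x g1 g2 : ℕ → H)
    (hg1 : ∀ k ≤ N, IsSubgradient mu1 f1 (x k) (g1 k))
    (hg2 : ∀ k ≤ N, IsSubgradient mu2 f2 (x k) (g2 k))
    (hdca : ∀ k < N, g1 (k + 1) = g2 k) :
    ((1 : ℝ) / 2) * ((Finset.range (N + 1)).inf' (Finset.nonempty_range_iff.mpr (Nat.succ_ne_zero N))
        fun k => ‖g1 k - g2 k‖ ^ 2) ≤
      ((f1 (x 0) - f2 (x 0)) - (f1 (x N) - f2 (x N))) /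
        ((mu1 + mu2) / mu2 ^ 2 * N) := by
  have hm2 : mu2 < 0 := by linarith
  have hm1 : 0 < mu1 := by linarith
  have hA : 0 < mu1 + mu2 := by linarith
  have hm2sq : 0 < mu2 ^ 2 := by nlinarith [hm2]
  have hB2 : 0 < L2 - mu2 := by linarith
  have hR : 0 < 1 / mu1 + 1 / mu2 + 1 / L2 := lt_of_le_of_lt (le_max_right _ 0) h7
  have hnum : (mu1 + mu2) * L2 + mu1 * mu2 < 0 := by
    have e : 1 / mu1 + 1 / mu2 + 1 / L2
        = ((mu1 + mu2) * L2 + mu1 * mu2) / (mu1 * mu2 * L2) := by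
      have hne1 : mu1 ≠ 0 := ne_of_gt hm1
      have hne2 : mu2 ≠ 0 := ne_of_lt hm2
      have hne3 : L2 ≠ 0 := ne_of_gt h6
      field_simp
      ring_nf
    rw [e] at hR
    have hden : mu1 * mu2 * L2 < 0 :=
      mul_neg_of_neg_of_pos (mul_neg_of_pos_of_neg hm1 hm2) h6
    by_contra hc
    push_neg at hc
    have : ((mu1 + mu2) * L2 + mu1 * mu2) / (mu1 * mu2 * L2) ≤ 0 :=
      div_nonpos_of_nonneg_of_nonpos hc hden.le
    linarith
  have hAL : (mu1 + mu2) * (L2 + mu2) ≤ mu2 ^ 2 := by nlinarith [hnum]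
  -- per-step inequality
  have hstep : ∀ k, k < N →
      (mu1 + mu2) * ‖g1 (k + 1) - g2 (k + 1)‖ ^ 2 ≤
        2 * ((f1 (x k) - f2 (x k)) - (f1 (x (k + 1)) - f2 (x (k + 1)))) * mu2 ^ 2 := by
    intro k hk
    have hkN : k ≤ N := hk.le
    have hk1N : k + 1 ≤ N := hk
    have hF1 := hg1 (k + 1) hk1N (x k)
    rw [hdca k hk] at hF1
    have hF3 := interp h2up h5 (hg2 k hkN) (hg2 (k + 1) hk1N)
    have hF4 := interp h2up h5 (hg2 (k + 1) hk1N) (hg2 k hkN)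
    have hswap : x k - x (k + 1) = -(x (k + 1) - x k) := by abel
    rw [hswap] at hF1 hF4
    rw [inner_neg_right, norm_neg] at hF1 hF4
    rw [smul_neg, sub_neg_eq_add] at hF4
    set d := x (k + 1) - x k with hd
    set u := g2 k - g2 (k + 1) + mu2 • d with hu
    have hv3 : g2 (k + 1) - g2 k - mu2 • d = -u := by rw [hu]; abel
    rw [hv3, norm_neg] at hF3
    have hw : g1 (k + 1) - g2 (k + 1) = g2 k - g2 (k + 1) := by rw [hdca k hk]
    rw [hw]
    have hUnn : (0 : ℝ) ≤ ‖u‖ ^ 2 := by positivity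
    have hDnn : (0 : ℝ) ≤ ‖d‖ ^ 2 := by positivity
    have hWexp : ‖g2 k - g2 (k + 1)‖ ^ 2
        = ‖u‖ ^ 2 - 2 * mu2 * ⟪u, d⟫ + mu2 ^ 2 * ‖d‖ ^ 2 := by
      have hw2 : g2 k - g2 (k + 1) = u - mu2 • d := by rw [hu]; abel
      rw [hw2, norm_sub_sq_real, real_inner_smul_right, norm_smul,
        Real.norm_eq_abs, mul_pow, sq_abs]
      ring
    have hud : ⟪u, d⟫ = ⟪g2 k, d⟫ - ⟪g2 (k + 1), d⟫ + mu2 * ‖d‖ ^ 2 := by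
      rw [hu, inner_add_left, inner_sub_left, real_inner_smul_left,
        real_inner_self_eq_norm_sq]
    have h2B2 : (0 : ℝ) < 2 * (L2 - mu2) := by linarith
    have hF3m : ‖u‖ ^ 2 ≤
        (f2 (x (k + 1)) - f2 (x k) - ⟪g2 k, d⟫ - mu2 / 2 * ‖d‖ ^ 2) * (2 * (L2 - mu2)) := by
      have : ‖u‖ ^ 2 / (2 * (L2 - mu2)) ≤
          f2 (x (k + 1)) - f2 (x k) - ⟪g2 k, d⟫ - mu2 / 2 * ‖d‖ ^ 2 := by linarith [hF3]
      exact (div_le_iff₀ h2B2).mp this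
    have hF4m : ‖u‖ ^ 2 ≤
        (f2 (x k) - f2 (x (k + 1)) + ⟪g2 (k + 1), d⟫ - mu2 / 2 * ‖d‖ ^ 2) * (2 * (L2 - mu2)) := by
      have : ‖u‖ ^ 2 / (2 * (L2 - mu2)) ≤
          f2 (x k) - f2 (x (k + 1)) + ⟪g2 (k + 1), d⟫ - mu2 / 2 * ‖d‖ ^ 2 := by linarith [hF4]
      exact (div_le_iff₀ h2B2).mp this
    have hud2 : (⟪g2 k, d⟫ - ⟪g2 (k + 1), d⟫) * (2 * (L2 - mu2))
        = (⟪u, d⟫ - mu2 * ‖d‖ ^ 2) * (2 * (L2 - mu2)) := by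
      linear_combination (-(2 * (L2 - mu2))) * hud
    have hiudB : ⟪u, d⟫ * (L2 - mu2) + ‖u‖ ^ 2 ≤ 0 := by
      linarith [hF3m, hF4m, hud2]
    have hF1m : (f1 (x (k + 1)) + -⟪g2 k, d⟫ + mu1 / 2 * ‖d‖ ^ 2) * (2 * (L2 - mu2))
        ≤ f1 (x k) * (2 * (L2 - mu2)) := by
      apply mul_le_mul_of_nonneg_right _ h2B2.le
      linarith [hF1]
    have h2Am : (0 : ℝ) ≤ 2 * (mu1 + mu2) * (-mu2) := by positivity
    nlinarith [mul_le_mul_of_nonneg_right hF1m (sq_nonneg mu2),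
      mul_le_mul_of_nonneg_right hF3m (sq_nonneg mu2),
      mul_le_mul_of_nonneg_left hiudB h2Am,
      mul_nonneg hUnn (sub_nonneg.mpr hAL), hWexp, hDnn, hUnn, hB2, hA]
  -- abbreviations
  set m := (Finset.range (N + 1)).inf'
      (Finset.nonempty_range_iff.mpr (Nat.succ_ne_zero N)) (fun k => ‖g1 k - g2 k‖ ^ 2) with hm
  have hmle : ∀ j, j ≤ N → m ≤ ‖g1 j - g2 j‖ ^ 2 := by
    intro j hj
    exact Finset.inf'_le _ (Finset.mem_range.mpr (by omega))
  set p := (mu1 + mu2) / mu2 ^ 2 with hp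
  have hp0 : 0 < p := div_pos hA hm2sq
  have hind : ∀ n, n ≤ N →
      p * n * m ≤ 2 * ((f1 (x 0) - f2 (x 0)) - (f1 (x n) - f2 (x n))) := by
    intro n
    induction n with
    | zero => intro _; simp
    | succ n ih =>
      intro hsn
      have hkn : n < N := by omega
      have h1' := ih (by omega)
      have hstepn := hstep n hkn
      have hmn := hmle (n + 1) (by omega)
      have hpw : p * ‖g1 (n + 1) - g2 (n + 1)‖ ^ 2 ≤
          2 * ((f1 (x n) - f2 (x n)) - (f1 (x (n + 1)) - f2 (x (n + 1)))) := by
        rw [hp, div_mul_eq_mul_div, div_le_iff₀ hm2sq]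
        linarith [hstepn]
      have hpm : p * m ≤ p * ‖g1 (n + 1) - g2 (n + 1)‖ ^ 2 :=
        mul_le_mul_of_nonneg_left hmn hp0.le
      push_cast
      nlinarith [h1', hpw, hpm]
  have hfin := hind N le_rfl
  have hNR : (0 : ℝ) < (N : ℝ) := by exact_mod_cast Nat.pos_of_ne_zero (by omega)
  have hpN : 0 < p * (N : ℝ) := mul_pos hp0 hNR
  rw [le_div_iff₀ hpN]
  nlinarith [hfin]
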